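/- Let X and Y be disjoint finite sets with |X| = n and |Y| = k. Let P be a subposet of the Boolean lattice Q = Q(X∪Y) such that P contains no chain with k+1 elements. Then there exists a copy of Q_n in Q which contains no vertex of P. -/

import Mathlib

/-- Let `X`, `Y` be disjoint sets with `|X| = n`, `|Y| = k`, and let `P` be a
subposet of `Q(X ∪ Y)` containing no chain with `k+1` elements. Then there is a copy of
`Q_n` in `Q(X ∪ Y)` containing no vertex of `P`. -/
theorem statement10 {V : Type*} [DecidableEq V] [Fintype V]
    (X Y : Finset V) (hd : Disjoint X Y) (hc : X ∪ Y = Finset.univ)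
    (n k : ℕ) (hX : X.card = n) (hY : Y.card = k)
    (P : Set (Finset V))
    (hP : ¬ ∃ C : Finset (Finset V),
        ↑C ⊆ P ∧ C.card = k + 1 ∧ IsChain (· ⊆ ·) (C : Set (Finset V))) :
    ∃ f : Finset (Fin n) → Finset V,
      Function.Injective f ∧
      (∀ A B : Finset (Fin n), A ⊆ B ↔ f A ⊆ f B) ∧
      ∀ A : Finset (Fin n), f A ∉ P := by
  classical
  -- embeddings of Fin n into X and Fin k into Y
  let xe : Fin n ≃ {x // x ∈ X} := (X.equivFinOfCardEq hX).symm
  let ye : Fin k ≃ {x // x ∈ Y} := (Y.equivFinOfCardEq hY).symm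
  let xf : Fin n ↪ V := ⟨fun i => (xe i : V), fun a b h => xe.injective (Subtype.ext h)⟩
  let yf : Fin k ↪ V := ⟨fun i => (ye i : V), fun a b h => ye.injective (Subtype.ext h)⟩
  let ι : Finset (Fin n) → Finset V := fun A => A.map xf
  let Yc : ℕ → Finset V := fun i => (Finset.univ.filter fun j : Fin k => (j : ℕ) < i).map yf
  have hιX : ∀ A, ι A ⊆ X := by
    intro A v hv
    simp only [ι, Finset.mem_map] at hv
    obtain ⟨a, -, rfl⟩ := hv
    exact (xe a).2
  have hYcY : ∀ i, Yc i ⊆ Y := by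
    intro i v hv
    simp only [Yc, Finset.mem_map, Finset.mem_filter] at hv
    obtain ⟨a, -, rfl⟩ := hv
    exact (ye a).2
  have hιmono : ∀ {A B : Finset (Fin n)}, A ⊆ B → ι A ⊆ ι B :=
    fun h => Finset.map_subset_map.2 h
  have hιle : ∀ {A B : Finset (Fin n)}, ι A ⊆ ι B → A ⊆ B :=
    fun h => Finset.map_subset_map.1 h
  have hιinj : Function.Injective ι := fun A B h =>
    Finset.map_injective xf h
  have hYmono : ∀ {i j : ℕ}, i ≤ j → Yc i ⊆ Yc j := by
    intro i j h
    apply Finset.map_subset_map.2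
    exact Finset.monotone_filter_right _ (fun a _ ha => lt_of_lt_of_le ha h)
  have hYcard : ∀ i, i ≤ k → (Yc i).card = i := by
    intro i hi
    have hlt : ∀ m ∈ Finset.range i, m < k := fun m hm =>
      lt_of_lt_of_le (Finset.mem_range.1 hm) hi
    have : (Finset.univ.filter fun j : Fin k => (j : ℕ) < i)
        = (Finset.range i).attachFin hlt := by
      ext a
      simp [Finset.mem_attachFin, Finset.mem_range]
    rw [Finset.card_map, this, Finset.card_attachFin, Finset.card_range]
  -- intersections with X recover ι A
  have hFX : ∀ (A : Finset (Fin n)) (i : ℕ), (ι A ∪ Yc i) ∩ X = ι A := by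
    intro A i
    apply Finset.Subset.antisymm
    · intro v hv
      rw [Finset.mem_inter, Finset.mem_union] at hv
      rcases hv with ⟨hv1 | hv1, hv2⟩
      · exact hv1
      · exact absurd (hd.forall_ne_finset hv2 (hYcY i hv1)) (by simp)
    · intro v hv
      rw [Finset.mem_inter, Finset.mem_union]
      exact ⟨Or.inl hv, hιX A hv⟩
  have hFY : ∀ (A : Finset (Fin n)) (i : ℕ), (ι A ∪ Yc i) ∩ Y = Yc i := by
    intro A i
    apply Finset.Subset.antisymm
    · intro v hv
      rw [Finset.mem_inter, Finset.mem_union] at hv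
      rcases hv with ⟨hv1 | hv1, hv2⟩
      · exact absurd (hd.forall_ne_finset (hιX A hv1) hv2) (by simp)
      · exact hv1
    · intro v hv
      rw [Finset.mem_inter, Finset.mem_union]
      exact ⟨Or.inr hv, hYcY i hv⟩
  have hFinj : ∀ (A : Finset (Fin n)) (i : ℕ) (B : Finset (Fin n)) (j : ℕ),
      i ≤ k → j ≤ k → ι A ∪ Yc i = ι B ∪ Yc j → A = B ∧ i = j := by
    intro A i B j hi hj h
    have h1 : ι A = ι B := by rw [← hFX A i, ← hFX B j, h]
    have h2 : Yc i = Yc j := by rw [← hFY A i, ← hFY B j, h]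
    refine ⟨hιinj h1, ?_⟩
    rw [← hYcard i hi, ← hYcard j hj, h2]
  -- the predicate: existence of a suitable chain of pairs
  let pred : Finset (Fin n) → ℕ → Prop := fun A m =>
    ∃ C : Finset (Finset (Fin n) × ℕ), C.card = m ∧
      (∀ p ∈ C, p.1 ⊆ A ∧ p.2 < m ∧ (ι p.1 ∪ Yc p.2) ∈ P) ∧
      (∀ p ∈ C, ∀ q ∈ C, (p.1 ⊆ q.1 ∧ p.2 ≤ q.2) ∨ (q.1 ⊆ p.1 ∧ q.2 ≤ p.2))
  let g : Finset (Fin n) → ℕ := fun A => Nat.findGreatest (pred A) k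
  have hpred0 : ∀ A, pred A 0 := by
    intro A
    exact ⟨∅, by simp, by simp, by simp⟩
  have hgle : ∀ A, g A ≤ k := fun A => Nat.findGreatest_le k
  have hgmono : ∀ {A B : Finset (Fin n)}, A ⊆ B → g A ≤ g B := by
    intro A B h
    apply Nat.findGreatest_mono (fun m hm => ?_) (le_refl k)
    obtain ⟨C, h1, h2, h3⟩ := hm
    exact ⟨C, h1, fun p hp => ⟨(h2 p hp).1.trans h, (h2 p hp).2⟩, h3⟩
  -- key claim: the diagonal point is not in P
  have hkey : ∀ A : Finset (Fin n), (ι A ∪ Yc (g A)) ∉ P := by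
    intro A hPA
    obtain ⟨C, hcard, hmem, hchain⟩ : pred A (g A) :=
      Nat.findGreatest_spec (Nat.zero_le k) (hpred0 A)
    have hnot : (A, g A) ∉ C := fun h => lt_irrefl _ (hmem _ h).2.1
    set C' : Finset (Finset (Fin n) × ℕ) := insert (A, g A) C with hC'
    have hcard' : C'.card = g A + 1 := by
      rw [hC', Finset.card_insert_of_notMem hnot, hcard]
    have hmem' : ∀ p ∈ C', p.1 ⊆ A ∧ p.2 ≤ g A ∧ (ι p.1 ∪ Yc p.2) ∈ P := by
      intro p hp
      rw [hC', Finset.mem_insert] at hp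
      rcases hp with rfl | hp
      · exact ⟨le_refl _, le_refl _, hPA⟩
      · exact ⟨(hmem p hp).1, le_of_lt (hmem p hp).2.1, (hmem p hp).2.2⟩
    have hchain' : ∀ p ∈ C', ∀ q ∈ C',
        (p.1 ⊆ q.1 ∧ p.2 ≤ q.2) ∨ (q.1 ⊆ p.1 ∧ q.2 ≤ p.2) := by
      intro p hp q hq
      rw [hC', Finset.mem_insert] at hp hq
      rcases hp with rfl | hp
      · rcases hq with rfl | hq
        · left; exact ⟨le_refl _, le_refl _⟩
        · right; exact ⟨(hmem q hq).1, le_of_lt (hmem q hq).2.1⟩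
      · rcases hq with rfl | hq
        · left; exact ⟨(hmem p hp).1, le_of_lt (hmem p hp).2.1⟩
        · exact hchain p hp q hq
    by_cases hgk : g A < k
    · have hnew : pred A (g A + 1) := by
        refine ⟨C', hcard', fun p hp => ?_, hchain'⟩
        exact ⟨(hmem' p hp).1, Nat.lt_succ_of_le (hmem' p hp).2.1, (hmem' p hp).2.2⟩
      exact Nat.findGreatest_is_greatest (Nat.lt_succ_self _) hgk hnew
    · have hgA : g A = k := le_antisymm (hgle A) (not_lt.1 hgk)
      apply hP
      refine ⟨C'.image (fun p => ι p.1 ∪ Yc p.2), ?_, ?_, ?_⟩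
      · intro S hS
        simp only [Finset.coe_image, Set.mem_image, Finset.mem_coe] at hS
        obtain ⟨p, hp, rfl⟩ := hS
        exact (hmem' p hp).2.2
      · rw [Finset.card_image_of_injOn, hcard', hgA]
        intro p hp q hq h
        have hpk : p.2 ≤ k := hgA ▸ (hmem' p hp).2.1
        have hqk : q.2 ≤ k := hgA ▸ (hmem' q hq).2.1
        obtain ⟨h1, h2⟩ := hFinj p.1 p.2 q.1 q.2 hpk hqk h
        exact Prod.ext h1 h2
      · intro S hS T hT _
        simp only [Finset.coe_image, Set.mem_image, Finset.mem_coe] at hS hT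
        obtain ⟨p, hp, rfl⟩ := hS
        obtain ⟨q, hq, rfl⟩ := hT
        rcases hchain' p hp q hq with ⟨h1, h2⟩ | ⟨h1, h2⟩
        · left; exact Finset.union_subset_union (hιmono h1) (hYmono h2)
        · right; exact Finset.union_subset_union (hιmono h1) (hYmono h2)
  -- the copy of Q_n
  refine ⟨fun A => ι A ∪ Yc (g A), ?_, ?_, ?_⟩
  · intro A B h
    apply hιinj
    rw [← hFX A (g A), ← hFX B (g B)]
    exact congrArg (· ∩ X) h
  · intro A B
    constructor
    · intro h
      exact Finset.union_subset_union (hιmono h) (hYmono (hgmono h))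
    · intro h
      apply hιle
      rw [← hFX A (g A), ← hFX B (g B)]
      exact Finset.inter_subset_inter h (le_refl _)
  · exact hkey
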